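/- Let γ > 0, c ∈ ℝ^d with c ≠ 0, and let f : ℝ^d → ℝ be twice continuously differentiable on a neighborhood of ω* ∈ ℝ^d with f(ω*) ≤ 0 and ∇f(ω*) ≠ 0, and suppose ⟨p, ∇²f(ω*)·p⟩ ≤ γ‖p‖² for all p ∈ ℝ^d. Let Π denote the orthogonal projection of ℝ^d onto the orthogonal complement of ∇f(ω*). If ω* is a local maximizer of ⟨c,·⟩ over {ω : f(ω) ≤ 0}, then ‖γ·v − Π(∇²f(ω*)·v)‖ ≤ γ‖v‖ for every v orthogonal to ∇f(ω*). If in addition ⟨v, ∇²f(ω*)·v⟩ > 0 for every nonzero v orthogonal to ∇f(ω*), then there exists ρ < γ such that ‖γ·v − Π(∇²f(ω*)·v)‖ ≤ ρ‖v‖ for every v orthogonal to ∇f(ω*). -/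

import Mathlib

open scoped RealInnerProductSpace

/-- `x` is a local maximizer of the linear objective `⟨c,·⟩` over the set `S`. -/
def IsLocalMaximizer {d : ℕ} (c : EuclideanSpace ℝ (Fin d))
    (S : Set (EuclideanSpace ℝ (Fin d))) (x : EuclideanSpace ℝ (Fin d)) : Prop :=
  x ∈ S ∧ ∃ δ > 0, ∀ ω ∈ S, ‖ω - x‖ ≤ δ → ⟪c, ω⟫ ≤ ⟪c, x⟫


open InnerProductSpace Filter Set Metric

private abbrev Ee (d : ℕ) := EuclideanSpace ℝ (Fin d)

theorem hess_inner {d : ℕ} (f : Ee d → ℝ) (ωs : Ee d)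
    (hd2 : DifferentiableAt ℝ (fderiv ℝ f) ωs) (v w : Ee d) :
    ⟪fderiv ℝ (gradient f) ωs v, w⟫ = fderiv ℝ (fderiv ℝ f) ωs v w := by
  have hgd : DifferentiableAt ℝ (gradient f) ωs := by
    have h : gradient f = fun y => (toDual ℝ (Ee d)).symm (fderiv ℝ f y) := rfl
    rw [h]
    exact (toDual ℝ (Ee d)).symm.toContinuousLinearEquiv.differentiableAt.comp _ hd2
  have h1 : HasFDerivAt (fun y => ⟪w, gradient f y⟫)
      ((innerSL ℝ w).comp (fderiv ℝ (gradient f) ωs)) ωs :=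
    (innerSL ℝ w).hasFDerivAt.comp ωs hgd.hasFDerivAt
  have h2 : HasFDerivAt (fun y => (fderiv ℝ f y) w)
      ((ContinuousLinearMap.apply ℝ ℝ w).comp (fderiv ℝ (fderiv ℝ f) ωs)) ωs :=
    (ContinuousLinearMap.apply ℝ ℝ w).hasFDerivAt.comp ωs hd2.hasFDerivAt
  have heq : (fun y => ⟪w, gradient f y⟫) = fun y => (fderiv ℝ f y) w := by
    funext y
    rw [real_inner_comm]
    exact toDual_symm_apply
  rw [heq] at h1
  have := h1.unique h2
  calc ⟪fderiv ℝ (gradient f) ωs v, w⟫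
      = ((innerSL ℝ w).comp (fderiv ℝ (gradient f) ωs)) v := by
        simp only [ContinuousLinearMap.coe_comp', Function.comp_apply, innerSL_apply_apply]; exact real_inner_comm _ _
    _ = ((ContinuousLinearMap.apply ℝ ℝ w).comp (fderiv ℝ (fderiv ℝ f) ωs)) v := by rw [this]
    _ = fderiv ℝ (fderiv ℝ f) ωs v w := rfl

set_option maxHeartbeats 1000000 in
theorem taylor_main {d : ℕ} (f : Ee d → ℝ) (ωs : Ee d) (hfeas : f ωs ≤ 0)
    (U : Set (Ee d)) (hU : U ∈ nhds ωs) (hCD : ContDiffOn ℝ 2 f U)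
    (hd2 : DifferentiableAt ℝ (fderiv ℝ f) ωs)
    (K : NNReal) (t : Set (Ee d)) (hlip : LipschitzOnWith K (fderiv ℝ f) t)
    (r : ℝ) (hr : 0 < r) (hball : ball ωs r ⊆ U ∩ t)
    (v w : Ee d) (hvr : ‖v‖ < r) (hv : ⟪gradient f ωs, v⟫ = 0)
    (hneg : ⟪gradient f ωs, w⟫ + fderiv ℝ (fderiv ℝ f) ωs v v / 2 < 0) :
    ∀ᶠ h in nhdsWithin (0:ℝ) (Set.Ioi 0), f (ωs + h • v + (h^2) • w) ≤ 0 := by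
  set l := nhdsWithin (0:ℝ) (Set.Ioi 0) with hl
  set D := fderiv ℝ f with hD
  set f'' := fderiv ℝ D ωs with hf''
  set g := gradient f ωs with hg
  have hDg : ∀ u : Ee d, D ωs u = ⟪g, u⟫ := fun u => (toDual_symm_apply).symm
  have hsub : ball ωs r ⊆ U := hball.trans (inter_subset_left)
  have hsubt : ball ωs r ⊆ t := hball.trans (inter_subset_right)
  have hws : ωs ∈ ball ωs r := mem_ball_self hr
  have hint : interior (ball ωs r) = ball ωs r := isOpen_ball.interior_eq
  have hfd : ∀ x ∈ interior (ball ωs r), HasFDerivAt f (D x) x := by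
    intro x hx
    rw [hint] at hx
    have hUx : U ∈ nhds x := mem_nhds_iff.2 ⟨ball ωs r, hsub, isOpen_ball, hx⟩
    exact ((hCD.contDiffAt hUx).differentiableAt two_ne_zero).hasFDerivAt
  have hx0 : HasFDerivWithinAt D f'' (interior (ball ωs r)) ωs :=
    hd2.hasFDerivAt.hasFDerivWithinAt
  have hmem0 : ωs + (0 : Ee d) ∈ interior (ball ωs r) := by
    rw [hint, add_zero]; exact hws
  have hmemv : ωs + (0 : Ee d) + v ∈ interior (ball ωs r) := by
    rw [hint, add_zero]
    simpa [mem_ball_iff_norm, add_sub_cancel_left] using hvr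
  have TA := (convex_ball ωs r).taylor_approx_two_segment hfd hws hx0 hmem0 hmemv
  have hDv0 : D ωs v = 0 := by rw [hDg]; exact hv
  have hA : (fun h : ℝ => f (ωs + h • v) - f ωs - (h^2/2) * f'' v v)
      =o[l] (fun h => h^2) := by
    refine TA.congr' ?_ (EventuallyEq.refl _ _)
    filter_upwards with h
    simp only [hDv0, smul_eq_mul, smul_zero, add_zero, map_zero,
      ContinuousLinearMap.zero_apply, mul_zero, sub_zero]
  set ε : ℝ := -(⟪g, w⟫ + f'' v v / 2) with hε
  have hεpos : 0 < ε := by rw [hε]; linarith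
  have E1 : ∀ᶠ h in l, |f (ωs + h • v) - f ωs - (h^2/2) * f'' v v| ≤ ε/4 * h^2 := by
    have := hA.def (by positivity : (0:ℝ) < ε/4)
    filter_upwards [this] with h hh
    simpa [abs_of_nonneg (sq_nonneg h), sq_abs] using hh
  have E3 : ∀ᶠ h in l, (K : ℝ) * ‖w‖^2 * h^2 + (K : ℝ) * ‖v‖ * ‖w‖ * h ≤ ε/4 := by
    have hcont : Tendsto (fun h : ℝ => (K : ℝ) * ‖w‖^2 * h^2 + (K : ℝ) * ‖v‖ * ‖w‖ * h)
        (nhds 0) (nhds 0) := by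
      have hc : Continuous (fun h : ℝ => (K : ℝ) * ‖w‖^2 * h^2 + (K : ℝ) * ‖v‖ * ‖w‖ * h) := by
        fun_prop
      have := hc.tendsto 0
      simpa using this
    exact (hcont.mono_left nhdsWithin_le_nhds).eventually
      (eventually_le_nhds (by positivity : (0:ℝ) < ε/4))
  have E4 : ∀ᶠ h in l, h * ‖v‖ + h^2 * ‖w‖ < r := by
    have hcont : Tendsto (fun h : ℝ => h * ‖v‖ + h^2 * ‖w‖) (nhds 0) (nhds 0) := by
      have hc : Continuous (fun h : ℝ => h * ‖v‖ + h^2 * ‖w‖) := by fun_prop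
      have := hc.tendsto 0
      simpa using this
    exact (hcont.mono_left nhdsWithin_le_nhds).eventually (eventually_lt_nhds hr)
  filter_upwards [E1, E3, E4, self_mem_nhdsWithin] with h h1 h3 h4 hpos
  replace hpos : 0 < h := hpos
  -- memberships
  have hsptmem : ωs + h • v ∈ ball ωs r := by
    rw [mem_ball_iff_norm, add_sub_cancel_left, norm_smul, Real.norm_eq_abs,
      abs_of_pos hpos]
    nlinarith [norm_nonneg w, sq_nonneg h]
  have hcb : closedBall (ωs + h • v) (h^2 * ‖w‖) ⊆ ball ωs r := by
    intro x hx
    rw [mem_closedBall, dist_eq_norm] at hx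
    rw [mem_ball_iff_norm]
    have : ‖x - ωs‖ ≤ ‖x - (ωs + h • v)‖ + ‖h • v‖ := by
      have h5 := norm_add_le (x - (ωs + h • v)) (h • v)
      have e : x - (ωs + h • v) + h • v = x - ωs := by abel
      rw [e] at h5
      exact h5
    rw [norm_smul, Real.norm_eq_abs, abs_of_pos hpos] at this
    linarith [hx]
  -- MVT bound T1
  have hT1 : |f (ωs + h • v + (h^2) • w) - f (ωs + h • v) - D (ωs + h • v) ((h^2) • w)|
      ≤ (K : ℝ) * (h^2 * ‖w‖) * (h^2 * ‖w‖) := by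
    have hcbconv : Convex ℝ (closedBall (ωs + h • v) (h^2 * ‖w‖)) := convex_closedBall _ _
    have hfd' : ∀ x ∈ closedBall (ωs + h • v) (h^2 * ‖w‖),
        HasFDerivWithinAt f (D x) (closedBall (ωs + h • v) (h^2 * ‖w‖)) x := by
      intro x hx
      exact (hfd x (by rw [hint]; exact hcb hx)).hasFDerivWithinAt
    have hbnd : ∀ x ∈ closedBall (ωs + h • v) (h^2 * ‖w‖),
        ‖D x - D (ωs + h • v)‖ ≤ (K : ℝ) * (h^2 * ‖w‖) := by
      intro x hx
      have := hlip.dist_le_mul x (hsubt (hcb hx)) (ωs + h • v) (hsubt hsptmem)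
      rw [dist_eq_norm, dist_eq_norm] at this
      calc ‖D x - D (ωs + h • v)‖ ≤ (K:ℝ) * ‖x - (ωs + h • v)‖ := this
        _ ≤ (K : ℝ) * (h^2 * ‖w‖) := by
            apply mul_le_mul_of_nonneg_left _ (K.coe_nonneg)
            rw [← dist_eq_norm]; exact mem_closedBall.1 hx
    have hxs : ωs + h • v ∈ closedBall (ωs + h • v) (h^2 * ‖w‖) :=
      mem_closedBall_self (by positivity)
    have hys : ωs + h • v + (h^2) • w ∈ closedBall (ωs + h • v) (h^2 * ‖w‖) := by
      rw [mem_closedBall, dist_eq_norm, add_sub_cancel_left, norm_smul,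
        Real.norm_eq_abs, abs_of_nonneg (sq_nonneg h)]
    have := hcbconv.norm_image_sub_le_of_norm_hasFDerivWithin_le' hfd' hbnd hxs hys
    rw [add_sub_cancel_left] at this
    calc |f (ωs + h • v + (h^2) • w) - f (ωs + h • v) - D (ωs + h • v) ((h^2) • w)|
        ≤ (K : ℝ) * (h^2 * ‖w‖) * ‖(h^2) • w‖ := this
      _ = (K : ℝ) * (h^2 * ‖w‖) * (h^2 * ‖w‖) := by
          rw [norm_smul, Real.norm_eq_abs, abs_of_nonneg (sq_nonneg h)]
  -- Lipschitz bound T2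
  have hT2 : |D (ωs + h • v) ((h^2) • w) - D ωs ((h^2) • w)|
      ≤ (K : ℝ) * (h * ‖v‖) * (h^2 * ‖w‖) := by
    have hdist : ‖D (ωs + h • v) - D ωs‖ ≤ (K : ℝ) * (h * ‖v‖) := by
      have := hlip.dist_le_mul (ωs + h • v) (hsubt hsptmem) ωs (hsubt hws)
      rw [dist_eq_norm, dist_eq_norm, add_sub_cancel_left, norm_smul,
        Real.norm_eq_abs, abs_of_pos hpos] at this
      exact this
    calc |D (ωs + h • v) ((h^2) • w) - D ωs ((h^2) • w)|
        = ‖(D (ωs + h • v) - D ωs) ((h^2) • w)‖ := by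
          rw [ContinuousLinearMap.sub_apply]; rfl
      _ ≤ ‖D (ωs + h • v) - D ωs‖ * ‖(h^2) • w‖ :=
          ContinuousLinearMap.le_opNorm _ _
      _ ≤ (K : ℝ) * (h * ‖v‖) * (h^2 * ‖w‖) := by
          rw [norm_smul, Real.norm_eq_abs, abs_of_nonneg (sq_nonneg h)]
          apply mul_le_mul_of_nonneg_right hdist (by positivity)
  have hDw : D ωs ((h^2) • w) = h^2 * ⟪g, w⟫ := by
    rw [map_smul, hDg]; rfl
  -- combine
  rw [abs_le] at h1 hT1 hT2
  have hh2 : (0:ℝ) ≤ h^2 := sq_nonneg h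
  have hmul : (K : ℝ) * (h^2 * ‖w‖) * (h^2 * ‖w‖) + (K : ℝ) * (h * ‖v‖) * (h^2 * ‖w‖)
      ≤ ε/4 * h^2 := by
    have := mul_le_mul_of_nonneg_right h3 hh2
    nlinarith [this]
  nlinarith [h1.2, hT1.2, hT2.2, hDw, hεpos]

theorem taylor_key {d : ℕ} (f : Ee d → ℝ) (ωs : Ee d)
    (hf : ∃ U ∈ nhds ωs, ContDiffOn ℝ 2 f U) (hfeas : f ωs ≤ 0)
    (v w : Ee d) (hv : ⟪gradient f ωs, v⟫ = 0)
    (hneg : ⟪gradient f ωs, w⟫ + fderiv ℝ (fderiv ℝ f) ωs v v / 2 < 0) :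
    ∀ᶠ h in nhdsWithin (0:ℝ) (Set.Ioi 0), f (ωs + h • v + (h^2) • w) ≤ 0 := by
  obtain ⟨U, hU, hCD⟩ := hf
  have hC2 : ContDiffAt ℝ 2 f ωs := hCD.contDiffAt hU
  have hd1 : ContDiffAt ℝ 1 (fderiv ℝ f) ωs := hC2.fderiv_right (by norm_num)
  have hd2 : DifferentiableAt ℝ (fderiv ℝ f) ωs := hd1.differentiableAt one_ne_zero
  obtain ⟨K, t, ht, hlip⟩ := hd1.exists_lipschitzOnWith
  obtain ⟨r, hr, hball⟩ : ∃ r > 0, ball ωs r ⊆ U ∩ t := by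
    rcases Metric.mem_nhds_iff.1 (Filter.inter_mem hU ht) with ⟨r, hr, h⟩
    exact ⟨r, hr, h⟩
  by_cases hvsmall : ‖v‖ < r
  case pos =>
    exact taylor_main f ωs hfeas U hU hCD hd2 K t hlip r hr hball v w hvsmall hv hneg
  case neg =>
    have hvn : (0:ℝ) < ‖v‖ := lt_of_lt_of_le hr (not_lt.1 hvsmall)
    set τ : ℝ := (r/2) / ‖v‖ with hτdef
    have hτ : 0 < τ := by positivity
    have hv' : ⟪gradient f ωs, τ • v⟫ = 0 := by
      rw [real_inner_smul_right, hv, mul_zero]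
    have hnorm : ‖τ • v‖ < r := by
      rw [norm_smul, Real.norm_eq_abs, abs_of_pos hτ, hτdef]
      rw [div_mul_cancel₀ _ (ne_of_gt hvn)]
      linarith
    have hneg' : ⟪gradient f ωs, (τ^2) • w⟫
        + fderiv ℝ (fderiv ℝ f) ωs (τ • v) (τ • v) / 2 < 0 := by
      rw [real_inner_smul_right]
      have e : fderiv ℝ (fderiv ℝ f) ωs (τ • v) (τ • v)
          = τ^2 * fderiv ℝ (fderiv ℝ f) ωs v v := by
        simp only [map_smul, ContinuousLinearMap.smul_apply, smul_eq_mul]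
        ring
      rw [e]
      have e2 : τ^2 * ⟪gradient f ωs, w⟫ + τ^2 * fderiv ℝ (fderiv ℝ f) ωs v v / 2
          = τ^2 * (⟪gradient f ωs, w⟫ + fderiv ℝ (fderiv ℝ f) ωs v v / 2) := by ring
      rw [e2]
      exact mul_neg_of_pos_of_neg (by positivity) hneg
    have key := taylor_main f ωs hfeas U hU hCD hd2 K t hlip r hr hball
      (τ • v) ((τ^2) • w) hnorm hv' hneg'
    have hmap : Tendsto (fun h : ℝ => h * τ⁻¹) (nhdsWithin 0 (Set.Ioi 0))
        (nhdsWithin 0 (Set.Ioi 0)) := by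
      apply tendsto_nhdsWithin_of_tendsto_nhds_of_eventually_within
      · have := ((continuous_mul_right τ⁻¹).tendsto (0:ℝ)).mono_left
          (nhdsWithin_le_nhds (s := Set.Ioi (0:ℝ)))
        simpa using this
      · filter_upwards [self_mem_nhdsWithin] with h hh
        exact mul_pos (show (0:ℝ) < h from hh) (by positivity)
    filter_upwards [hmap.eventually key] with h hh
    have heq : ωs + (h*τ⁻¹) • (τ • v) + ((h*τ⁻¹)^2) • ((τ^2) • w)
        = ωs + h • v + (h^2) • w := by
      rw [smul_smul, smul_smul]
      have e1 : h * τ⁻¹ * τ = h := by field_simp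
      have e2 : (h*τ⁻¹)^2 * τ^2 = h^2 := by field_simp
      rw [e1, e2]
    rw [heq] at hh
    exact hh

-- consequence: inner-product inequalities

theorem cone_bound {d : ℕ} (c : Ee d) (f : Ee d → ℝ) (ωs : Ee d)
    (hf : ∃ U ∈ nhds ωs, ContDiffOn ℝ 2 f U) (hfeas : f ωs ≤ 0)
    (hmax : IsLocalMaximizer c {ω | f ω ≤ 0} ωs)
    (v w : Ee d) (hv : ⟪gradient f ωs, v⟫ = 0)
    (hneg : ⟪gradient f ωs, w⟫ + fderiv ℝ (fderiv ℝ f) ωs v v / 2 < 0) :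
    ⟪c, v⟫ ≤ 0 ∧ (⟪c, v⟫ = 0 → ⟪c, w⟫ ≤ 0) := by
  obtain ⟨-, δ, hδ, hloc⟩ := hmax
  have hfeasev := taylor_key f ωs hf hfeas v w hv hneg
  have hnear : ∀ᶠ h in nhdsWithin (0:ℝ) (Set.Ioi 0),
      ‖(ωs + h • v + (h^2) • w) - ωs‖ ≤ δ := by
    have hcont : Tendsto (fun h : ℝ => h * ‖v‖ + h^2 * ‖w‖) (nhds 0) (nhds 0) := by
      have hc : Continuous (fun h : ℝ => h * ‖v‖ + h^2 * ‖w‖) := by fun_prop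
      have := hc.tendsto 0
      simpa using this
    have hev := (hcont.mono_left (nhdsWithin_le_nhds (s := Set.Ioi (0:ℝ)))).eventually
      (eventually_le_nhds hδ)
    filter_upwards [hev, self_mem_nhdsWithin] with h hh hpos
    replace hpos : 0 < h := hpos
    have : ‖(ωs + h • v + (h^2) • w) - ωs‖ ≤ ‖h • v‖ + ‖(h^2) • w‖ := by
      have e : (ωs + h • v + (h^2) • w) - ωs = h • v + (h^2) • w := by abel
      rw [e]
      exact norm_add_le _ _
    rw [norm_smul, norm_smul, Real.norm_eq_abs, Real.norm_eq_abs, abs_of_pos hpos,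
      abs_of_nonneg (sq_nonneg h)] at this
    linarith
  have hineq : ∀ᶠ h in nhdsWithin (0:ℝ) (Set.Ioi 0),
      h * ⟪c, v⟫ + h^2 * ⟪c, w⟫ ≤ 0 := by
    filter_upwards [hfeasev, hnear] with h h1 h2
    have := hloc _ h1 h2
    have e : ⟪c, ωs + h • v + (h^2) • w⟫ = ⟪c, ωs⟫ + h * ⟪c, v⟫ + h^2 * ⟪c, w⟫ := by
      rw [inner_add_right, inner_add_right, real_inner_smul_right, real_inner_smul_right]
    rw [e] at this
    linarith
  constructor
  · have hev : ∀ᶠ h in nhdsWithin (0:ℝ) (Set.Ioi 0), ⟪c, v⟫ + h * ⟪c, w⟫ ≤ 0 := by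
      filter_upwards [hineq, self_mem_nhdsWithin] with h h1 hpos
      replace hpos : 0 < h := hpos
      nlinarith
    have hcont : Tendsto (fun h : ℝ => ⟪c, v⟫ + h * ⟪c, w⟫)
        (nhdsWithin (0:ℝ) (Set.Ioi 0)) (nhds ⟪c, v⟫) := by
      have hc : Continuous (fun h : ℝ => ⟪c, v⟫ + h * ⟪c, w⟫) := by fun_prop
      have := hc.tendsto 0
      simp only [zero_mul, add_zero] at this
      exact this.mono_left nhdsWithin_le_nhds
    exact le_of_tendsto hcont hev
  · intro hcv
    obtain ⟨h, hh, hpos⟩ := (hineq.and self_mem_nhdsWithin).exists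
    replace hpos : 0 < h := hpos
    rw [hcv, mul_zero, zero_add] at hh
    have h2 : 0 < h^2 := pow_pos hpos 2
    by_contra hcw
    push_neg at hcw
    nlinarith

theorem hess_psd {d : ℕ} (c : Ee d) (hc : c ≠ 0) (f : Ee d → ℝ) (ωs : Ee d)
    (hf : ∃ U ∈ nhds ωs, ContDiffOn ℝ 2 f U) (hfeas : f ωs ≤ 0)
    (hg : gradient f ωs ≠ 0)
    (hmax : IsLocalMaximizer c {ω | f ω ≤ 0} ωs) :
    ∀ v : Ee d, ⟪gradient f ωs, v⟫ = 0 → 0 ≤ fderiv ℝ (fderiv ℝ f) ωs v v := by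
  set g := gradient f ωs with hgdef
  have hgnorm : (0:ℝ) < ‖g‖ := norm_pos_iff.2 hg
  have hgn : (0:ℝ) < ‖g‖^2 := by positivity
  -- first-order necessary condition
  have P1 : ∀ w : Ee d, ⟪g, w⟫ < 0 → ⟪c, w⟫ ≤ 0 := by
    intro w hw
    have h0 : ⟪g, (0 : Ee d)⟫ = 0 := inner_zero_right g
    have hneg : ⟪g, w⟫ + fderiv ℝ (fderiv ℝ f) ωs 0 0 / 2 < 0 := by
      simp only [map_zero, ContinuousLinearMap.zero_apply]
      linarith
    have := cone_bound c f ωs hf hfeas hmax 0 w h0 hneg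
    exact this.2 (inner_zero_right c)
  -- KKT
  set lam : ℝ := ⟪c, g⟫ / ‖g‖^2 with hlam
  set u : Ee d := c - lam • g with hu
  have hlmg : lam * ‖g‖^2 = ⟪c, g⟫ := by
    rw [hlam]; field_simp
  have hug : ⟪g, u⟫ = 0 := by
    rw [hu, inner_sub_right, real_inner_smul_right, real_inner_self_eq_norm_sq,
      hlmg, real_inner_comm, sub_self]
  have hcg_nonneg : 0 ≤ ⟪c, g⟫ := by
    have h1 : ⟪g, -g⟫ < 0 := by
      rw [inner_neg_right, real_inner_self_eq_norm_sq]; linarith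
    have := P1 (-g) h1
    rw [inner_neg_right] at this
    linarith
  have hcu : ⟪c, u⟫ = ‖u‖^2 := by
    have h1 : ⟪c - lam • g, u⟫ = ⟪c, u⟫ - lam * ⟪g, u⟫ := by
      rw [inner_sub_left, real_inner_smul_left]
    calc ⟪c, u⟫ = ⟪c, u⟫ - lam * ⟪g, u⟫ := by rw [hug, mul_zero, sub_zero]
      _ = ⟪c - lam • g, u⟫ := h1.symm
      _ = ⟪u, u⟫ := by rw [← hu]
      _ = ‖u‖^2 := real_inner_self_eq_norm_sq u
  have hu0 : u = 0 := by
    have hall : ∀ s : ℝ, 0 < s → ‖u‖^2 ≤ s * ⟪c, g⟫ := by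
      intro s hs
      have h1 : ⟪g, u - s • g⟫ < 0 := by
        rw [inner_sub_right, real_inner_smul_right, hug, real_inner_self_eq_norm_sq]
        nlinarith
      have h2 := P1 _ h1
      rw [inner_sub_right, real_inner_smul_right, hcu] at h2
      linarith
    by_contra hne
    have hun : (0:ℝ) < ‖u‖ := norm_pos_iff.2 hne
    have hupos : (0:ℝ) < ‖u‖^2 := by positivity
    rcases le_or_gt ⟪c, g⟫ 0 with hle | hlt
    · have := hall 1 one_pos
      nlinarith
    · have h2 := hall (‖u‖^2 / (2 * ⟪c, g⟫)) (by positivity)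
      have h3 : ∀ A : ℝ, A ≠ 0 → ‖u‖^2 / (2*A) * A = ‖u‖^2/2 := by
        intro A hA; field_simp
      rw [h3 _ (ne_of_gt hlt)] at h2
      linarith
  have hceq : c = lam • g := by
    have : u = 0 := hu0
    rw [hu, sub_eq_zero] at this
    exact this
  have hlampos : 0 < lam := by
    rcases (div_nonneg hcg_nonneg (le_of_lt hgn)).lt_or_eq with h | h
    · exact h
    · exfalso
      apply hc
      have hz : lam = 0 := h.symm
      rw [hceq, hz, zero_smul]
  -- second-order condition
  intro v hv
  by_contra hneg'
  push_neg at hneg'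
  set q : ℝ := fderiv ℝ (fderiv ℝ f) ωs v v with hq
  set ε : ℝ := -q/4 with hε
  have hεpos : 0 < ε := by rw [hε]; linarith
  set w : Ee d := -((q/2 + ε)/‖g‖^2) • g with hw
  have hgw : ⟪g, w⟫ = -(q/2 + ε) := by
    rw [hw, real_inner_smul_right, real_inner_self_eq_norm_sq]
    field_simp
  have hcond : ⟪g, w⟫ + q/2 < 0 := by rw [hgw]; linarith
  have hcv : ⟪c, v⟫ = 0 := by
    rw [hceq, real_inner_smul_left, hv, mul_zero]
  have hcw := (cone_bound c f ωs hf hfeas hmax v w hv hcond).2 hcv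
  rw [hceq, real_inner_smul_left, hgw] at hcw
  nlinarith


set_option maxHeartbeats 1000000 in
/-- **The projected Jacobian is (strictly) non-expansive.** At a local maximizer `ω*` with
second derivatives of `f` bounded above by `γ`, the projected map
`v ↦ γv − Π(∇²f(ω*)v)` on the orthogonal complement of `∇f(ω*)` has norm at most `γ`;
strictly less than `γ` when the projected Hessian is positive definite. -/
theorem stmt_12 {d : ℕ} (γ : ℝ) (hγ : 0 < γ)
    (c : EuclideanSpace ℝ (Fin d)) (hc : c ≠ 0)
    (f : EuclideanSpace ℝ (Fin d) → ℝ) (ωs : EuclideanSpace ℝ (Fin d))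
    (hf : ∃ U ∈ nhds ωs, ContDiffOn ℝ 2 f U)
    (hfeas : f ωs ≤ 0) (hg : gradient f ωs ≠ 0)
    (hbound : ∀ p : EuclideanSpace ℝ (Fin d),
      ⟪p, fderiv ℝ (gradient f) ωs p⟫ ≤ γ * ‖p‖ ^ 2)
    (hmax : IsLocalMaximizer c {ω | f ω ≤ 0} ωs) :
    (∀ v : EuclideanSpace ℝ (Fin d), ⟪gradient f ωs, v⟫ = 0 →
      ‖γ • v - (Submodule.orthogonalProjection (Submodule.span ℝ {gradient f ωs})ᗮ
          (fderiv ℝ (gradient f) ωs v) : EuclideanSpace ℝ (Fin d))‖ ≤ γ * ‖v‖) ∧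
    ((∀ v : EuclideanSpace ℝ (Fin d), v ≠ 0 → ⟪gradient f ωs, v⟫ = 0 →
        0 < ⟪v, fderiv ℝ (gradient f) ωs v⟫) →
      ∃ ρ < γ, ∀ v : EuclideanSpace ℝ (Fin d), ⟪gradient f ωs, v⟫ = 0 →
        ‖γ • v - (Submodule.orthogonalProjection (Submodule.span ℝ {gradient f ωs})ᗮ
            (fderiv ℝ (gradient f) ωs v) : EuclideanSpace ℝ (Fin d))‖ ≤ ρ * ‖v‖) := by
  obtain ⟨U, hU, hCD⟩ := hf
  have hC2 : ContDiffAt ℝ 2 f ωs := hCD.contDiffAt hU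
  have hd2 : DifferentiableAt ℝ (fderiv ℝ f) ωs :=
    (hC2.fderiv_right (by norm_num) : ContDiffAt ℝ 1 (fderiv ℝ f) ωs).differentiableAt one_ne_zero
  set g := gradient f ωs with hgdef
  set H := fderiv ℝ (gradient f) ωs with hH
  set V := (Submodule.span ℝ {g})ᗮ with hV
  have hinner : ∀ v w : Ee d, ⟪H v, w⟫ = fderiv ℝ (fderiv ℝ f) ωs v w :=
    hess_inner f ωs hd2
  have hsymm : ∀ v w : Ee d, ⟪H v, w⟫ = ⟪H w, v⟫ := by
    intro v w
    rw [hinner, hinner]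
    exact (hC2.isSymmSndFDerivAt (by simp [minSmoothness_of_isRCLikeNormedField])) v w
  have hpsd : ∀ v : Ee d, ⟪g, v⟫ = 0 → 0 ≤ ⟪v, H v⟫ := by
    intro v hv
    rw [real_inner_comm, hinner]
    exact hess_psd c hc f ωs ⟨U, hU, hCD⟩ hfeas hg hmax v hv
  have hmemV : ∀ v : Ee d, v ∈ V ↔ ⟪g, v⟫ = 0 := fun v =>
    Submodule.mem_orthogonal_singleton_iff_inner_right
  have hproj : ∀ u : Ee d, u ∈ V → ∀ x : Ee d,
      ⟪u, (Submodule.orthogonalProjection V x : Ee d)⟫ = ⟪u, x⟫ := by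
    intro u hu x
    have hx := Submodule.sub_starProjection_mem_orthogonal (K := V) x
    have h0 : ⟪u, x - (Submodule.orthogonalProjection V x : Ee d)⟫ = 0 :=
      (Submodule.mem_orthogonal V _).1 hx u hu
    rw [inner_sub_right] at h0
    linarith
  -- Cauchy-Schwarz for the Hessian form on V
  have hCS : ∀ x y : Ee d, x ∈ V → y ∈ V → ⟪H x, y⟫^2 ≤ ⟪x, H x⟫ * ⟪y, H y⟫ := by
    intro x y hx hy
    have key : ∀ t : ℝ, 0 ≤ ⟪y, H y⟫ * (t*t) + (2 * ⟪H x, y⟫) * t + ⟪x, H x⟫ := by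
      intro t
      have hmem : x + t • y ∈ V := V.add_mem hx (V.smul_mem t hy)
      have h0 : 0 ≤ ⟪x + t • y, H (x + t • y)⟫ := hpsd _ ((hmemV _).1 hmem)
      have e : ⟪x + t • y, H (x + t • y)⟫
          = ⟪y, H y⟫ * (t*t) + (2 * ⟪H x, y⟫) * t + ⟪x, H x⟫ := by
        rw [map_add, map_smul]
        rw [inner_add_left, inner_add_right, inner_add_right]
        rw [real_inner_smul_left, real_inner_smul_left, real_inner_smul_right,
          real_inner_smul_right]
        have c1 : ⟪x, H y⟫ = ⟪H x, y⟫ := by rw [real_inner_comm, hsymm]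
        have c2 : ⟪y, H x⟫ = ⟪H x, y⟫ := by rw [real_inner_comm]
        rw [c1, c2]
        ring
      rw [← e]
      exact h0
    have hd : discrim ⟪y, H y⟫ (2 * ⟪H x, y⟫) ⟪x, H x⟫ ≤ 0 := discrim_le_zero key
    rw [discrim] at hd
    nlinarith [hd]
  -- the main quadratic bound
  have main : ∀ v : Ee d, ⟪g, v⟫ = 0 →
      ‖γ • v - (Submodule.orthogonalProjection V (H v) : Ee d)‖^2
        ≤ γ^2 * ‖v‖^2 - γ * ⟪v, H v⟫ := by
    intro v hv
    have hvV : v ∈ V := (hmemV v).2 hv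
    set T : Ee d := (Submodule.orthogonalProjection V (H v) : Ee d) with hT
    have hTV : T ∈ V := SetLike.coe_mem _
    have e1 : ⟪v, T⟫ = ⟪v, H v⟫ := hproj v hvV (H v)
    have e2 : ‖T‖^2 = ⟪H v, T⟫ := by
      rw [← real_inner_self_eq_norm_sq]
      rw [show ⟪T, T⟫ = ⟪T, H v⟫ from hproj T hTV (H v)]
      rw [real_inner_comm]
    have hB : 0 ≤ ⟪v, H v⟫ := hpsd v hv
    have hTbound : ⟪T, H T⟫ ≤ γ * ‖T‖^2 := hbound T
    have hN : ‖T‖^2 ≤ γ * ⟪v, H v⟫ := by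
      rcases eq_or_lt_of_le (sq_nonneg ‖T‖) with h0 | hpos
      · rw [← h0]
        exact mul_nonneg (le_of_lt hγ) hB
      · have hcs := hCS v T hvV hTV
        rw [← e2] at hcs
        have hTT : ⟪T, H T⟫ ≤ γ * ‖T‖^2 := hTbound
        have h5 : (‖T‖^2)^2 ≤ ⟪v, H v⟫ * (γ * ‖T‖^2) := le_trans hcs
          (mul_le_mul_of_nonneg_left hTT hB)
        have h4 : ‖T‖^2 * ‖T‖^2 ≤ (γ * ⟪v, H v⟫) * ‖T‖^2 := by nlinarith [h5]
        exact le_of_mul_le_mul_right h4 hpos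
    have hexp : ‖γ • v - T‖^2 = γ^2 * ‖v‖^2 - 2 * γ * ⟪v, H v⟫ + ‖T‖^2 := by
      rw [norm_sub_sq_real]
      rw [real_inner_smul_left, e1]
      rw [norm_smul, Real.norm_eq_abs, abs_of_pos hγ, mul_pow]
      ring
    rw [hexp]
    linarith
  have conclude : ∀ ρ : ℝ, 0 ≤ ρ → ∀ v : Ee d,
      ‖γ • v - (Submodule.orthogonalProjection V (H v) : Ee d)‖^2 ≤ ρ^2 * ‖v‖^2 →
      ‖γ • v - (Submodule.orthogonalProjection V (H v) : Ee d)‖ ≤ ρ * ‖v‖ := by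
    intro ρ hρ v hsq
    have h1 := Real.sqrt_le_sqrt hsq
    rw [Real.sqrt_sq (norm_nonneg _)] at h1
    rw [show ρ^2 * ‖v‖^2 = (ρ * ‖v‖)^2 by ring] at h1
    rw [Real.sqrt_sq (by positivity)] at h1
    exact h1
  constructor
  · intro v hv
    apply conclude γ (le_of_lt hγ) v
    have h1 := main v hv
    have hB := hpsd v hv
    have h2 : 0 ≤ γ * ⟪v, H v⟫ := mul_nonneg (le_of_lt hγ) hB
    linarith
  · intro hstrict
    by_cases hV0 : ∀ v : Ee d, ⟪g, v⟫ = 0 → v = 0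
    · refine ⟨γ/2, by linarith, ?_⟩
      intro v hv
      rw [hV0 v hv]
      simp
    · push_neg at hV0
      obtain ⟨v₀, hv₀g, hv₀⟩ := hV0
      have hv₀V : v₀ ∈ V := (hmemV v₀).2 hv₀g
      -- compact sphere argument
      have hS : ((‖v₀‖⁻¹ • (⟨v₀, hv₀V⟩ : V)) : V) ∈ Metric.sphere (0 : V) 1 := by
        rw [mem_sphere_zero_iff_norm]
        rw [norm_smul, Real.norm_eq_abs, abs_of_pos (by
          simpa using norm_pos_iff.2 hv₀)]
        have : ‖(⟨v₀, hv₀V⟩ : V)‖ = ‖v₀‖ := rfl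
        rw [this]
        exact inv_mul_cancel₀ (norm_ne_zero_iff.2 hv₀)
      have hcont : Continuous (fun x : V => ⟪(x : Ee d), H x⟫) := by
        exact Continuous.inner continuous_subtype_val
          (H.continuous.comp continuous_subtype_val)
      obtain ⟨z, hzS, hzmin⟩ := (isCompact_sphere (0 : V) 1).exists_isMinOn
        ⟨_, hS⟩ hcont.continuousOn
      set m : ℝ := ⟪(z : Ee d), H z⟫ with hm
      have hz1 : ‖(z : Ee d)‖ = 1 := by
        have := mem_sphere_zero_iff_norm.1 hzS
        exact this
      have hzne : (z : Ee d) ≠ 0 := by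
        intro h0
        rw [h0, norm_zero] at hz1
        norm_num at hz1
      have hzg : ⟪g, (z : Ee d)⟫ = 0 := (hmemV _).1 z.2
      have hmpos : 0 < m := hstrict (z : Ee d) hzne hzg
      have hmγ : m ≤ γ := by
        have := hbound (z : Ee d)
        rw [hz1] at this
        simpa using this
      have hmB : ∀ v : Ee d, ⟪g, v⟫ = 0 → m * ‖v‖^2 ≤ ⟪v, H v⟫ := by
        intro v hv
        rcases eq_or_ne v 0 with rfl | hvne
        · simp
        · have hvV : v ∈ V := (hmemV v).2 hv
          have hnv : (0:ℝ) < ‖v‖ := norm_pos_iff.2 hvne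
          have hmemS : ((‖v‖⁻¹ • (⟨v, hvV⟩ : V)) : V) ∈ Metric.sphere (0 : V) 1 := by
            rw [mem_sphere_zero_iff_norm, norm_smul, Real.norm_eq_abs,
              abs_of_pos (by positivity)]
            have : ‖(⟨v, hvV⟩ : V)‖ = ‖v‖ := rfl
            rw [this]
            exact inv_mul_cancel₀ (norm_ne_zero_iff.2 hvne)
          have hmin := hzmin hmemS
          simp only [Set.mem_setOf_eq] at hmin
          have hcoe : ((‖v‖⁻¹ • (⟨v, hvV⟩ : V) : V) : Ee d) = ‖v‖⁻¹ • v := by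
            simp
          rw [hcoe] at hmin
          have he : ⟪‖v‖⁻¹ • v, H (‖v‖⁻¹ • v)⟫ = ‖v‖⁻¹ * (‖v‖⁻¹ * ⟪v, H v⟫) := by
            rw [map_smul, real_inner_smul_left, real_inner_smul_right]
          rw [he] at hmin
          have h3 : m * ‖v‖^2 ≤ ‖v‖⁻¹ * (‖v‖⁻¹ * ⟪v, H v⟫) * ‖v‖^2 :=
            mul_le_mul_of_nonneg_right hmin (sq_nonneg _)
          have hgen : ∀ (a X : ℝ), a ≠ 0 → a⁻¹ * (a⁻¹ * X) * a^2 = X := by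
            intro a X ha
            have e : a⁻¹ * (a⁻¹ * X) * a^2 = X * ((a⁻¹*a)*(a⁻¹*a)) := by ring
            rw [e, inv_mul_cancel₀ ha]
            ring
          rw [hgen _ _ (ne_of_gt hnv)] at h3
          exact h3
      refine ⟨Real.sqrt (γ^2 - γ*m), ?_, ?_⟩
      · rw [Real.sqrt_lt' hγ]
        nlinarith
      · intro v hv
        apply conclude _ (Real.sqrt_nonneg _) v
        rw [Real.sq_sqrt (by nlinarith : (0:ℝ) ≤ γ^2 - γ*m)]
        have h1 := main v hv
        have h2 := hmB v hv
        have h3 := mul_le_mul_of_nonneg_left h2 (le_of_lt hγ)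
        have h4 : (γ^2 - γ*m) * ‖v‖^2 = γ^2*‖v‖^2 - γ*(m*‖v‖^2) := by ring
        linarith
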